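/- Let f be a time-varying vector field on E = EuclideanSpace ℝ (Fin n) with f(·,t) globally Lipschitz with constant L > 0 for every t, and let φ be a flow for f that is differentiable in the initial state with derivative Dφ(t;t₀,x) whose directional curves are lifted solutions of the complete lift of f, satisfies the cocycle identity Dφ(τ;s,φ(s;t,x)) ∘ Dφ(s;t,x) = Dφ(τ;t,x) for τ ≥ s ≥ t, and is such that τ ↦ ‖Dφ(τ;t,x)y‖ is continuous. Assume the system is uniformly globally incrementally exponentially stable: ‖φ(t;t₀,x₁) − φ(t;t₀,x₂)‖ ≤ K e^{−λ(t−t₀)} ‖x₁ − x₂‖ for all x₁,x₂ and t ≥ t₀, with K ≥ 1, λ > 0. Then for every p ≥ 1 there exist constants c₁, c₂, k > 0 and a function V : ℝ × E × E → ℝ such that c₁‖y‖^p ≤ V(t,x,y) ≤ c₂‖y‖^p for all t,x,y, and along every lifted solution (x(·),y(·)) of the complete lift of f starting at time t₀ given by x(t) = φ(t;t₀,x₀), y(t) = Dφ(t;t₀,x₀)y₀, the function t ↦ V(t,x(t),y(t)) has right derivative at t₀ at most −k V(t₀,x₀,y₀). -/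

import Mathlib

noncomputable section

/-- The Euclidean state space. -/
abbrev E (n : ℕ) := EuclideanSpace ℝ (Fin n)

/-- `x` is a solution of `ẋ = f(x,t)` starting at `(t₀, x₀)`. -/
def IsSolution {n : ℕ} (f : E n → ℝ → E n) (t₀ : ℝ) (x₀ : E n) (x : ℝ → E n) : Prop :=
  x t₀ = x₀ ∧ ∀ t, t₀ ≤ t → HasDerivAt x (f (x t) t) t

/-- `(x, y)` is a lifted solution of the complete lift of `f`, starting at `(t₀, x₀, y₀)`:
`ẋ = f(x,t)`, `ẏ = (D_x f(x,t)) y`. -/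
def IsLiftedSolution {n : ℕ} (f : E n → ℝ → E n) (t₀ : ℝ) (x₀ y₀ : E n)
    (x y : ℝ → E n) : Prop :=
  IsSolution f t₀ x₀ x ∧ y t₀ = y₀ ∧
    ∀ t, t₀ ≤ t → HasDerivAt y (fderiv ℝ (fun z => f z t) (x t) (y t)) t

/-- `φ` is a flow for `f`: `φ t₀ t₀ x = x` and `t ↦ φ t t₀ x` solves `ẋ = f(x,t)`. -/
def IsFlow {n : ℕ} (f : E n → ℝ → E n) (φ : ℝ → ℝ → E n → E n) : Prop :=
  ∀ t₀ x, IsSolution f t₀ x (fun t => φ t t₀ x)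

/-- `φ` is differentiable in the initial state with derivative `Dφ`, and the directional
curves `t ↦ Dφ t t₀ x v` are lifted solutions of the complete lift of `f`. -/
def FlowDiffInitial {n : ℕ} (f : E n → ℝ → E n) (φ : ℝ → ℝ → E n → E n)
    (Dφ : ℝ → ℝ → E n → (E n →L[ℝ] E n)) : Prop :=
  (∀ t t₀ x, t₀ ≤ t → HasFDerivAt (fun z => φ t t₀ z) (Dφ t t₀ x) x) ∧
  ∀ t₀ x v, IsLiftedSolution f t₀ x v (fun t => φ t t₀ x) (fun t => Dφ t t₀ x v)

/-- Converse theorem for uniform global incremental exponential stability: if the system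
is UGIES, then for every `p ≥ 1` there is a Finsler–Lyapunov function `V` with
`c₁‖y‖^p ≤ V(t,x,y) ≤ c₂‖y‖^p` whose right derivative along the lifted flow
`t ↦ (φ(t;t₀,x₀), Dφ(t;t₀,x₀) y₀)` at `t = t₀` is at most `−k V(t₀,x₀,y₀)`. -/
theorem converse_ugies {n : ℕ} (f : E n → ℝ → E n)
    (hf : ∀ t, ContDiff ℝ 1 (fun z => f z t))
    (L : ℝ) (hL : 0 < L)
    (hfLip : ∀ (t : ℝ) (p q : E n), ‖f p t - f q t‖ ≤ L * ‖p - q‖)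
    (φ : ℝ → ℝ → E n → E n) (Dφ : ℝ → ℝ → E n → (E n →L[ℝ] E n))
    (hφ : IsFlow f φ) (hDφ : FlowDiffInitial f φ Dφ)
    (hcocycle : ∀ (t s τ : ℝ) (x : E n), t ≤ s → s ≤ τ →
      (Dφ τ s (φ s t x)).comp (Dφ s t x) = Dφ τ t x)
    (hcont : ∀ (t : ℝ) (x y : E n), Continuous fun τ => ‖Dφ τ t x y‖)
    (K lam : ℝ) (hK : 1 ≤ K) (hlam : 0 < lam)
    (hUGIES : ∀ (t₀ t : ℝ) (x₁ x₂ : E n), t₀ ≤ t →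
      ‖φ t t₀ x₁ - φ t t₀ x₂‖ ≤ K * Real.exp (-lam * (t - t₀)) * ‖x₁ - x₂‖) :
    ∀ p : ℝ, 1 ≤ p →
      ∃ (c₁ c₂ k : ℝ) (V : ℝ → E n → E n → ℝ),
        0 < c₁ ∧ 0 < c₂ ∧ 0 < k ∧
        (∀ (t : ℝ) (x y : E n), c₁ * ‖y‖ ^ p ≤ V t x y ∧ V t x y ≤ c₂ * ‖y‖ ^ p) ∧
        (∀ (t₀ : ℝ) (x₀ y₀ : E n), ∃ d : ℝ,
          HasDerivWithinAt (fun t => V t (φ t t₀ x₀) (Dφ t t₀ x₀ y₀)) d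
            (Set.Ici t₀) t₀ ∧
          d ≤ -k * V t₀ x₀ y₀) := by
  intro p hp
  have hp0 : (0:ℝ) < p := lt_of_lt_of_le one_pos hp
  obtain ⟨hDφ1, hDφ2⟩ := hDφ
  have hinit : ∀ (t : ℝ) (x y : E n), Dφ t t x y = y := fun t x y => (hDφ2 t x y).2.1
  have hKp : (1:ℝ) ≤ K ^ p := Real.one_le_rpow hK hp0.le
  have hKpos : (0:ℝ) < K := lt_of_lt_of_le one_pos hK
  set T : ℝ := Real.log (2 * K ^ p) / (lam * p) with hTdef
  have hlogpos : 0 < Real.log (2 * K ^ p) := Real.log_pos (by linarith)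
  have hlp : 0 < lam * p := mul_pos hlam hp0
  have hTpos : 0 < T := div_pos hlogpos hlp
  -- decay bound on the operator norm of Dφ
  have hDnorm : ∀ (t τ : ℝ) (x : E n), t ≤ τ →
      ‖Dφ τ t x‖ ≤ K * Real.exp (-lam * (τ - t)) := by
    intro t τ x h
    have hC : (0:ℝ) ≤ K * Real.exp (-lam * (τ - t)) :=
      mul_nonneg hKpos.le (Real.exp_pos _).le
    have hlip : LipschitzWith (K * Real.exp (-lam * (τ - t))).toNNReal (fun z => φ τ t z) := by
      apply LipschitzWith.of_dist_le_mul
      intro a b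
      rw [dist_eq_norm, dist_eq_norm, Real.coe_toNNReal _ hC]
      exact hUGIES t τ a b h
    have := (hDφ1 τ t x h).le_of_lipschitz hlip
    rwa [Real.coe_toNNReal _ hC] at this
  have hDy : ∀ (t τ : ℝ) (x y : E n), t ≤ τ →
      ‖Dφ τ t x y‖ ≤ K * Real.exp (-lam * (τ - t)) * ‖y‖ := by
    intro t τ x y h
    exact le_trans ((Dφ τ t x).le_opNorm y)
      (mul_le_mul_of_nonneg_right (hDnorm t τ x h) (norm_nonneg y))
  -- norm bound on the Jacobian of f
  have hAnorm : ∀ (τ : ℝ) (z : E n), ‖fderiv ℝ (fun w => f w τ) z‖ ≤ L := by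
    intro τ z
    have hlip : LipschitzWith L.toNNReal (fun w => f w τ) := by
      apply LipschitzWith.of_dist_le_mul
      intro a b
      rw [dist_eq_norm, dist_eq_norm, Real.coe_toNNReal _ hL.le]
      exact hfLip τ a b
    have hd := (((hf τ).differentiable one_ne_zero) z).hasFDerivAt
    have := hd.le_of_lipschitz hlip
    rwa [Real.coe_toNNReal _ hL.le] at this
  -- exponential lower bound via Grönwall (in reversed time)
  have hDlow : ∀ (t s : ℝ) (x y : E n), 0 ≤ s →
      Real.exp (-(L * s)) * ‖y‖ ≤ ‖Dφ (t + s) t x y‖ := by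
    intro t s x y hs
    set Y : ℝ → E n := fun τ => Dφ τ t x y with hYdef
    have hY : ∀ τ, t ≤ τ → HasDerivAt Y (fderiv ℝ (fun z => f z τ) (φ τ t x) (Y τ)) τ :=
      (hDφ2 t x y).2.2
    set z : ℝ → E n := fun s' => Y (t + s - s') with hzdef
    set z' : ℝ → E n := fun s' =>
      (-1 : ℝ) • (fderiv ℝ (fun w => f w (t + s - s')) (φ (t + s - s') t x) (Y (t + s - s'))) with hz'def
    have hz : ∀ s' ∈ Set.Icc (0:ℝ) s, HasDerivAt z (z' s') s' := by
      intro s' hs'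
      have hin : HasDerivAt (fun w : ℝ => t + s - w) (-1) s' := by
        simpa using ((hasDerivAt_id s').const_sub (t + s))
      have hτ : t ≤ t + s - s' := by
        have := hs'.2; linarith
      have := HasDerivAt.scomp (𝕜 := ℝ) s' (hY (t + s - s') hτ) hin
      exact this
    have hgron := norm_le_gronwallBound_of_norm_deriv_right_le
      (f := z) (f' := z') (δ := ‖z 0‖) (K := L) (ε := 0) (a := 0) (b := s)
      (fun s' hs' => ((hz s' hs').continuousAt).continuousWithinAt)
      (fun s' hs' => ((hz s' ⟨hs'.1, hs'.2.le⟩).hasDerivWithinAt))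
      le_rfl
      (by
        intro s' hs'
        have h1 : ‖z' s'‖ = ‖fderiv ℝ (fun w => f w (t + s - s')) (φ (t + s - s') t x)
            (Y (t + s - s'))‖ := by
          simp [hz'def, norm_smul]
        rw [h1, add_zero]
        calc ‖fderiv ℝ (fun w => f w (t + s - s')) (φ (t + s - s') t x) (Y (t + s - s'))‖
            ≤ ‖fderiv ℝ (fun w => f w (t + s - s')) (φ (t + s - s') t x)‖ * ‖Y (t + s - s')‖ :=
              ContinuousLinearMap.le_opNorm _ _
          _ ≤ L * ‖z s'‖ :=
              mul_le_mul_of_nonneg_right (hAnorm _ _) (norm_nonneg _))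
    have hzs := hgron s ⟨hs, le_rfl⟩
    rw [sub_zero, gronwallBound_ε0] at hzs
    have hz0 : z 0 = Y (t + s) := by simp [hzdef]
    have hzs' : z s = y := by
      simp only [hzdef]
      have : t + s - s = t := by ring
      rw [this, hYdef]
      exact hinit t x y
    rw [hz0, hzs'] at hzs
    have hexp : (0:ℝ) < Real.exp (L * s) := Real.exp_pos _
    rw [Real.exp_neg]
    rw [inv_mul_le_iff₀ hexp]
    calc ‖y‖ ≤ ‖Y (t + s)‖ * Real.exp (L * s) := hzs
      _ = Real.exp (L * s) * ‖Y (t + s)‖ := by ring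
  -- continuity of the integrand
  have hci : ∀ (t : ℝ) (x y : E n), Continuous (fun s => ‖Dφ (t + s) t x y‖ ^ p) := by
    intro t x y
    exact ((hcont t x y).comp (continuous_const.add continuous_id)).rpow_const
      (fun s => Or.inr hp0.le)
  set c₂ : ℝ := T * K ^ p with hc₂def
  set c₁ : ℝ := T * Real.exp (-(L * p * T)) with hc₁def
  have hc₂pos : 0 < c₂ := mul_pos hTpos (lt_of_lt_of_le one_pos hKp)
  have hc₁pos : 0 < c₁ := mul_pos hTpos (Real.exp_pos _)
  set V : ℝ → E n → E n → ℝ := fun t x y => ∫ s in (0:ℝ)..T, ‖Dφ (t + s) t x y‖ ^ p with hVdef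
  -- sandwich bounds
  have hVbounds : ∀ (t : ℝ) (x y : E n), c₁ * ‖y‖ ^ p ≤ V t x y ∧ V t x y ≤ c₂ * ‖y‖ ^ p := by
    intro t x y
    constructor
    · have hmono := intervalIntegral.integral_mono_on (μ := MeasureTheory.volume) hTpos.le
        (intervalIntegrable_const (c := Real.exp (-(L * p * T)) * ‖y‖ ^ p))
        ((hci t x y).intervalIntegrable 0 T)
        (by
          intro s hs
          have hlow := hDlow t s x y hs.1
          have h1 : (Real.exp (-(L * s)) * ‖y‖) ^ p ≤ ‖Dφ (t + s) t x y‖ ^ p :=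
            Real.rpow_le_rpow (mul_nonneg (Real.exp_pos _).le (norm_nonneg _)) hlow hp0.le
          have h2 : (Real.exp (-(L * s)) * ‖y‖) ^ p
              = Real.exp (-(L * s) * p) * ‖y‖ ^ p := by
            rw [Real.mul_rpow (Real.exp_pos _).le (norm_nonneg _), ← Real.exp_mul]
          have h3 : Real.exp (-(L * p * T)) ≤ Real.exp (-(L * s) * p) := by
            apply Real.exp_le_exp.2
            nlinarith [mul_le_mul_of_nonneg_left hs.2 (mul_nonneg hL.le hp0.le)]
          calc Real.exp (-(L * p * T)) * ‖y‖ ^ p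
              ≤ Real.exp (-(L * s) * p) * ‖y‖ ^ p :=
                mul_le_mul_of_nonneg_right h3 (Real.rpow_nonneg (norm_nonneg _) p)
            _ = (Real.exp (-(L * s)) * ‖y‖) ^ p := h2.symm
            _ ≤ ‖Dφ (t + s) t x y‖ ^ p := h1)
      rw [intervalIntegral.integral_const] at hmono
      calc c₁ * ‖y‖ ^ p = (T - 0) • (Real.exp (-(L * p * T)) * ‖y‖ ^ p) := by
            simp [hc₁def]; ring
        _ ≤ V t x y := hmono
    · have hmono := intervalIntegral.integral_mono_on (μ := MeasureTheory.volume) hTpos.le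
        ((hci t x y).intervalIntegrable 0 T)
        (intervalIntegrable_const (c := K ^ p * ‖y‖ ^ p))
        (by
          intro s hs
          have hub : ‖Dφ (t + s) t x y‖ ≤ K * ‖y‖ := by
            have h1 := hDy t (t + s) x y (by linarith [hs.1])
            have h2 : Real.exp (-lam * (t + s - t)) ≤ 1 := by
              rw [Real.exp_le_one_iff]
              have : t + s - t = s := by ring
              rw [this]
              nlinarith [hs.1, hlam.le]
            calc ‖Dφ (t + s) t x y‖ ≤ K * Real.exp (-lam * (t + s - t)) * ‖y‖ := h1
              _ ≤ K * 1 * ‖y‖ := by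
                  apply mul_le_mul_of_nonneg_right _ (norm_nonneg _)
                  exact mul_le_mul_of_nonneg_left h2 hKpos.le
              _ = K * ‖y‖ := by ring
          calc ‖Dφ (t + s) t x y‖ ^ p ≤ (K * ‖y‖) ^ p :=
                Real.rpow_le_rpow (norm_nonneg _) hub hp0.le
            _ = K ^ p * ‖y‖ ^ p := Real.mul_rpow hKpos.le (norm_nonneg _))
      rw [intervalIntegral.integral_const] at hmono
      calc V t x y ≤ (T - 0) • (K ^ p * ‖y‖ ^ p) := hmono
        _ = c₂ * ‖y‖ ^ p := by simp [hc₂def]; ring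
  refine ⟨c₁, c₂, 1 / (2 * c₂), V, hc₁pos, hc₂pos, by positivity, hVbounds, ?_⟩
  intro t₀ x₀ y₀
  set h : ℝ → ℝ := fun τ => ‖Dφ τ t₀ x₀ y₀‖ ^ p with hhdef
  have hhc : Continuous h := (hcont t₀ x₀ y₀).rpow_const (fun s => Or.inr hp0.le)
  set H : ℝ → ℝ := fun u => ∫ τ in t₀..u, h τ with hHdef
  have hH : ∀ u : ℝ, HasDerivAt H (h u) u := fun u =>
    intervalIntegral.integral_hasDerivAt_right (hhc.intervalIntegrable _ _)
      (hhc.stronglyMeasurableAtFilter _ _) hhc.continuousAt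
  have hg : HasDerivAt (fun t => H (t + T) - H t) (h (t₀ + T) - h t₀) t₀ := by
    have h1 : HasDerivAt (fun t : ℝ => H (t + T)) (h (t₀ + T)) t₀ := by
      have := (hH (t₀ + T)).comp t₀ ((hasDerivAt_id t₀).add_const T)
      simpa [Function.comp_def] using this
    exact h1.sub (hH t₀)
  have key : ∀ t ∈ Set.Ici t₀,
      (fun t => V t (φ t t₀ x₀) (Dφ t t₀ x₀ y₀)) t = H (t + T) - H t := by
    intro t ht
    have ht' : t₀ ≤ t := ht
    have step1 : V t (φ t t₀ x₀) (Dφ t t₀ x₀ y₀) = ∫ s in (0:ℝ)..T, h (t + s) := by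
      apply intervalIntegral.integral_congr
      intro s hs
      rw [Set.uIcc_of_le hTpos.le] at hs
      have hco := hcocycle t₀ t (t + s) x₀ ht' (by linarith [hs.1])
      have : Dφ (t + s) t (φ t t₀ x₀) (Dφ t t₀ x₀ y₀) = Dφ (t + s) t₀ x₀ y₀ := by
        rw [← hco]; rfl
      simp only [hhdef]
      rw [this]
    have step2 : (∫ s in (0:ℝ)..T, h (t + s)) = ∫ τ in t..(t + T), h τ := by
      have := intervalIntegral.integral_comp_add_left (a := (0:ℝ)) (b := T) h t
      simpa using this
    have step3 : (∫ τ in t..(t + T), h τ) = H (t + T) - H t :=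
      (intervalIntegral.integral_interval_sub_left
        (hhc.intervalIntegrable t₀ (t + T)) (hhc.intervalIntegrable t₀ t)).symm
    simp only [step1, step2, step3]
  refine ⟨h (t₀ + T) - h t₀, ?_, ?_⟩
  · exact hg.hasDerivWithinAt.congr key (key t₀ Set.self_mem_Ici)
  · -- final estimate
    have hht₀ : h t₀ = ‖y₀‖ ^ p := by
      simp only [hhdef]; rw [hinit]
    have hhT : h (t₀ + T) ≤ (1 / 2) * ‖y₀‖ ^ p := by
      have h1 := hDy t₀ (t₀ + T) x₀ y₀ (by linarith)
      have h2 : t₀ + T - t₀ = T := by ring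
      rw [h2] at h1
      have h3 : ‖Dφ (t₀ + T) t₀ x₀ y₀‖ ^ p ≤ (K * Real.exp (-lam * T) * ‖y₀‖) ^ p :=
        Real.rpow_le_rpow (norm_nonneg _) h1 hp0.le
      have h4 : (K * Real.exp (-lam * T) * ‖y₀‖) ^ p
          = K ^ p * Real.exp (-lam * T * p) * ‖y₀‖ ^ p := by
        rw [Real.mul_rpow (mul_nonneg hKpos.le (Real.exp_pos _).le) (norm_nonneg _),
          Real.mul_rpow hKpos.le (Real.exp_pos _).le, ← Real.exp_mul]
      have h5 : K ^ p * Real.exp (-lam * T * p) = 1 / 2 := by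
        have hTe : -lam * T * p = -Real.log (2 * K ^ p) := by
          rw [hTdef]
          field_simp
        rw [hTe, Real.exp_neg, Real.exp_log (by positivity)]
        field_simp
      simp only [hhdef]
      calc ‖Dφ (t₀ + T) t₀ x₀ y₀‖ ^ p ≤ K ^ p * Real.exp (-lam * T * p) * ‖y₀‖ ^ p := by
            rw [← h4]; exact h3
        _ = (1 / 2) * ‖y₀‖ ^ p := by rw [h5]
    have hVub := (hVbounds t₀ x₀ y₀).2
    have hyp : (0:ℝ) ≤ ‖y₀‖ ^ p := Real.rpow_nonneg (norm_nonneg _) p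
    have : (1 / (2 * c₂)) * V t₀ x₀ y₀ ≤ (1 / 2) * ‖y₀‖ ^ p := by
      rw [div_mul_eq_mul_div, one_mul, div_le_iff₀ (by positivity)]
      calc V t₀ x₀ y₀ ≤ c₂ * ‖y₀‖ ^ p := hVub
        _ = 1 / 2 * ‖y₀‖ ^ p * (2 * c₂) := by ring
    rw [hht₀]
    linarith
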